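/- The formal power series P(x) = Σ_{n≥0} p(n) xⁿ over ℤ satisfies (1 - x - x²)² · P(x) = x(1 - x + x³ - x⁴). -/
import Mathlib


/-- `l` is a composition of `n`: a finite list of positive integers summing to `n`
(the empty list is the unique composition of `0`). -/
def IsComposition (n : ℕ) (l : List ℕ) : Prop :=
  (∀ x ∈ l, 0 < x) ∧ l.sum = n

/-- The Arndt condition: `σ_{2i-1} > σ_{2i}` (1-based) for every `i` with `2i ≤ ℓ`;
with 0-based indices, `l[2i] > l[2i+1]` whenever `2i+1 < l.length`. -/
def IsArndt (l : List ℕ) : Prop :=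
  ∀ i : ℕ, 2 * i + 1 < l.length → l.getD (2 * i + 1) 0 < l.getD (2 * i) 0

/-- `arndt n` is the number of Arndt compositions of `n`. -/
noncomputable def arndt (n : ℕ) : ℕ :=
  Set.ncard {l : List ℕ | IsComposition n l ∧ IsArndt l}

/-- `arndtParts n m` is the number of Arndt compositions of `n` with exactly `m` parts. -/
noncomputable def arndtParts (n m : ℕ) : ℕ :=
  Set.ncard {l : List ℕ | IsComposition n l ∧ IsArndt l ∧ l.length = m}

/-- The generalized binomial coefficient `C(a,b) = a(a-1)⋯(a-b+1)/b!` for an integer `a`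
and a natural number `b` (represented as a nonnegative integer); it is `0` for negative `b`. -/
def genChoose (a b : ℤ) : ℤ :=
  if 0 ≤ b then (∏ i ∈ Finset.range b.toNat, (a - (i : ℤ))) / (b.toNat.factorial : ℤ) else 0

/-- `totalParts n` is the total number of parts summed over all Arndt compositions of `n`. -/
noncomputable def totalParts (n : ℕ) : ℕ :=
  ∑ᶠ l ∈ {l : List ℕ | IsComposition n l ∧ IsArndt l}, l.length

open Finset

def arA : ℕ → Finset (List ℕ)
  | 0 => {[]}
  | (n+1) =>
    insert [n+1] <|
      (Finset.Icc 1 (n+1)).biUnion fun b =>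
        (Finset.Icc (b+1) (n+1-b)).biUnion fun a =>
          (if h : n+1-a-b < n+1 then arA (n+1-a-b) else ∅).image fun t => a::b::t
  termination_by n => n
  decreasing_by exact h

lemma arA_succ (n : ℕ) : arA (n+1) =
    insert [n+1] ((Finset.Icc 1 (n+1)).biUnion fun b =>
      (Finset.Icc (b+1) (n+1-b)).biUnion fun a =>
        (arA (n+1-a-b)).image fun t => a::b::t) := by
  rw [arA]
  congr 1
  apply Finset.biUnion_congr rfl
  intro b hb
  apply Finset.biUnion_congr rfl
  intro a ha
  rw [dif_pos]
  simp only [Finset.mem_Icc] at hb ha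
  omega

lemma isArndt_nil : IsArndt [] := by intro i hi; simp at hi

lemma isArndt_singleton (a : ℕ) : IsArndt [a] := by intro i hi; simp at hi

lemma isArndt_cons_cons {a b : ℕ} {t : List ℕ} :
    IsArndt (a::b::t) ↔ b < a ∧ IsArndt t := by
  constructor
  · intro h
    refine ⟨by simpa using h 0 (by simp), ?_⟩
    intro i hi
    have := h (i+1) (by simp only [List.length_cons]; omega)
    have e1 : 2 * (i+1) + 1 = (2*i+1) + 1 + 1 := by ring
    have e2 : 2 * (i+1) = (2*i) + 1 + 1 := by ring
    rw [e1, e2, List.getD_cons_succ, List.getD_cons_succ, List.getD_cons_succ,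
      List.getD_cons_succ] at this
    exact this
  · rintro ⟨hba, ht⟩ i hi
    match i with
    | 0 => simpa using hba
    | (j+1) =>
      have e1 : 2 * (j+1) + 1 = (2*j+1) + 1 + 1 := by ring
      have e2 : 2 * (j+1) = (2*j) + 1 + 1 := by ring
      rw [e1, e2, List.getD_cons_succ, List.getD_cons_succ, List.getD_cons_succ,
        List.getD_cons_succ]
      apply ht
      simp only [List.length_cons] at hi
      omega

lemma mem_arA : ∀ n l, l ∈ arA n ↔ IsComposition n l ∧ IsArndt l := by
  intro n
  induction n using Nat.strong_induction_on with
  | _ n ih =>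
    match n with
    | 0 =>
      intro l
      constructor
      · intro hl
        simp only [arA, Finset.mem_singleton] at hl
        subst hl
        exact ⟨⟨by simp, by simp⟩, isArndt_nil⟩
      · rintro ⟨⟨hpos, hsum⟩, _⟩
        have : l = [] := by
          cases l with
          | nil => rfl
          | cons x t =>
            exfalso
            have hx := hpos x (by simp)
            simp only [List.sum_cons] at hsum
            omega
        subst this
        simp [arA]
    | (m+1) =>
      intro l
      rw [arA_succ]
      simp only [Finset.mem_insert, Finset.mem_biUnion, Finset.mem_image, Finset.mem_Icc]
      constructor
      · rintro (rfl | ⟨b, hb, a, ha, t, ht, rfl⟩)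
        · exact ⟨⟨by simp, by simp⟩, isArndt_singleton _⟩
        · have hlt : m+1-a-b < m+1 := by omega
          obtain ⟨⟨hpos, hsum⟩, harndt⟩ := (ih _ hlt t).mp ht
          refine ⟨⟨?_, ?_⟩, ?_⟩
          · intro x hx
            simp only [List.mem_cons] at hx
            rcases hx with rfl | rfl | hx
            · omega
            · omega
            · exact hpos x hx
          · simp only [List.sum_cons, hsum]
            omega
          · exact isArndt_cons_cons.mpr ⟨by omega, harndt⟩
      · rintro ⟨⟨hpos, hsum⟩, harndt⟩
        match l with
        | [] => simp at hsum
        | [x] =>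
          left
          simp only [List.sum_cons, List.sum_nil, add_zero] at hsum
          subst hsum
          rfl
        | (a::b::t) =>
          right
          obtain ⟨hba, ht⟩ := isArndt_cons_cons.mp harndt
          have ha1 : 0 < a := hpos a (by simp)
          have hb1 : 0 < b := hpos b (by simp)
          simp only [List.sum_cons] at hsum
          have htsum : t.sum = m+1-a-b := by omega
          refine ⟨b, by omega, a, by omega, t, ?_, rfl⟩
          have hlt : m+1-a-b < m+1 := by omega
          exact (ih _ hlt t).mpr ⟨⟨fun x hx => hpos x (by simp [hx]), htsum⟩, ht⟩

lemma arA_coe (n : ℕ) :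
    {l : List ℕ | IsComposition n l ∧ IsArndt l} = ↑(arA n) := by
  ext l; simp [mem_arA]

lemma sum_arA_succ (w : List ℕ → ℕ) (n : ℕ) :
    ∑ l ∈ arA (n+1), w l =
      w [n+1] + ∑ b ∈ Icc 1 (n+1), ∑ a ∈ Icc (b+1) (n+1-b),
        ∑ t ∈ arA (n+1-a-b), w (a::b::t) := by
  rw [arA_succ, Finset.sum_insert, Finset.sum_biUnion]
  · congr 1
    apply Finset.sum_congr rfl
    intro b hb
    rw [Finset.sum_biUnion]
    · apply Finset.sum_congr rfl
      intro a ha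
      rw [Finset.sum_image]
      intro x _ y _ hxy
      simpa using hxy
    · -- inner disjointness over a
      intro a1 h1 a2 h2 hne
      apply Finset.disjoint_left.mpr
      intro l hl1 hl2
      simp only [Finset.coe_Icc, Finset.mem_image] at hl1 hl2
      obtain ⟨t1, _, rfl⟩ := hl1
      obtain ⟨t2, _, he⟩ := hl2
      apply hne
      exact (List.cons.injEq _ _ _ _ ▸ he).1.symm
  · -- outer disjointness over b
    intro b1 h1 b2 h2 hne
    apply Finset.disjoint_left.mpr
    intro l hl1 hl2
    simp only [Finset.mem_biUnion, Finset.mem_image] at hl1 hl2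
    obtain ⟨a1, _, t1, _, rfl⟩ := hl1
    obtain ⟨a2, _, t2, _, he⟩ := hl2
    apply hne
    simp only [List.cons.injEq] at he
    exact he.2.1.symm
  · -- [n+1] not in biUnion
    simp only [Finset.mem_biUnion, Finset.mem_image]
    rintro ⟨b, _, a, _, t, _, he⟩
    simp at he

def fA (n : ℕ) : ℕ := (arA n).card

def pA (n : ℕ) : ℕ := ∑ l ∈ arA n, l.length

lemma fA_zero : fA 0 = 1 := by simp [fA, arA]

lemma pA_zero : pA 0 = 0 := by simp [pA, arA]

lemma fA_succ (n : ℕ) : fA (n+1) =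
    1 + ∑ b ∈ Icc 1 (n+1), ∑ a ∈ Icc (b+1) (n+1-b), fA (n+1-a-b) := by
  have := sum_arA_succ (fun _ => 1) n
  simp only [Finset.sum_const, smul_eq_mul, mul_one] at this
  simpa [fA] using this

lemma pA_succ (n : ℕ) : pA (n+1) =
    1 + ∑ b ∈ Icc 1 (n+1), ∑ a ∈ Icc (b+1) (n+1-b),
      (pA (n+1-a-b) + 2 * fA (n+1-a-b)) := by
  have := sum_arA_succ (fun l => l.length) n
  simp only [List.length_cons, List.length_nil] at this
  rw [pA, this]
  congr 1
  apply Finset.sum_congr rfl; intro b _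
  apply Finset.sum_congr rfl; intro a _
  rw [Finset.sum_add_distrib]
  simp [pA, fA, mul_comm, Finset.sum_add_distrib]
  ring

lemma sumPairs (n : ℕ) (g : ℕ → ℤ) :
    ∑ b ∈ Icc 1 n, ∑ a ∈ Icc (b+1) (n-b), g (a+b)
      = ∑ k ∈ range (n+1), (((k-1)/2 : ℕ) : ℤ) * g k := by
  have h1 : ∀ b ∈ Icc 1 n, ∑ a ∈ Icc (b+1) (n-b), g (a+b) = ∑ k ∈ Icc (2*b+1) n, g k := by
    intro b hb
    simp only [Finset.mem_Icc] at hb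
    rw [show Finset.Icc (2*b+1) n = Finset.Icc (b+1+b) (n-b+b) by congr 1 <;> omega]
    rw [← Finset.map_add_right_Icc, Finset.sum_map]
    rfl
  rw [Finset.sum_congr rfl h1]
  rw [Finset.sum_comm' (s' := fun k => Icc 1 ((k-1)/2)) (t' := range (n+1))]
  · apply Finset.sum_congr rfl
    intro k _
    rw [Finset.sum_const, Nat.card_Icc]
    simp [mul_comm]
  · intro b k
    simp only [Finset.mem_Icc, Finset.mem_range]
    omega

lemma fA_rec (n : ℕ) (hn : 1 ≤ n) :
    (fA n : ℤ) = 1 + ∑ k ∈ range (n+1), (((k-1)/2 : ℕ) : ℤ) * (fA (n-k) : ℤ) := by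
  obtain ⟨m, rfl⟩ := Nat.exists_eq_add_of_le hn
  rw [← sumPairs (1+m) (fun k => (fA (1+m-k) : ℤ))]
  rw [show 1+m = m+1 by omega, fA_succ m]
  push_cast
  congr 1
  apply Finset.sum_congr rfl; intro b _
  apply Finset.sum_congr rfl; intro a _
  rw [show m+1-a-b = m+1-(a+b) by omega]

lemma pA_rec (n : ℕ) (hn : 1 ≤ n) :
    (pA n : ℤ) = 1 + ∑ k ∈ range (n+1), (((k-1)/2 : ℕ) : ℤ) *
      (2 * (fA (n-k) : ℤ) + (pA (n-k) : ℤ)) := by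
  obtain ⟨m, rfl⟩ := Nat.exists_eq_add_of_le hn
  rw [← sumPairs (1+m) (fun k => 2 * (fA (1+m-k) : ℤ) + (pA (1+m-k) : ℤ))]
  rw [show 1+m = m+1 by omega, pA_succ m]
  push_cast
  congr 1
  apply Finset.sum_congr rfl; intro b _
  apply Finset.sum_congr rfl; intro a _
  rw [show m+1-a-b = m+1-(a+b) by omega]
  ring

open PowerSeries

noncomputable def Fser : PowerSeries ℤ := PowerSeries.mk fun n => (fA n : ℤ)
noncomputable def Pser : PowerSeries ℤ := PowerSeries.mk fun n => (pA n : ℤ)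
noncomputable def Eser : PowerSeries ℤ := PowerSeries.mk fun _ => (1 : ℤ)
noncomputable def Cser : PowerSeries ℤ := PowerSeries.mk fun k => (((k-1)/2 : ℕ) : ℤ)

lemma hEser : (1 - X) * Eser = 1 := by
  ext n
  rw [sub_mul, one_mul, map_sub, ← pow_one (X : PowerSeries ℤ), coeff_X_pow_mul']
  simp only [Eser, coeff_mk, coeff_one]
  split_ifs <;> omega

lemma hCser : (1 - X - X^2 + X^3) * Cser = X^3 := by
  have e : (1 - X - X^2 + X^3) * Cser
      = Cser - X^1*Cser - X^2*Cser + X^3*Cser := by ring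
  rw [e]
  ext n
  rw [map_add, map_sub, map_sub, coeff_X_pow_mul', coeff_X_pow_mul', coeff_X_pow_mul',
    coeff_X_pow]
  simp only [Cser, coeff_mk]
  split_ifs <;> omega

lemma hR1 : Fser = Eser + Cser * Fser := by
  ext n
  rw [map_add, coeff_mul, Finset.Nat.sum_antidiagonal_eq_sum_range_succ_mk]
  simp only [Fser, Eser, Cser, coeff_mk]
  match n with
  | 0 => simp [fA_zero]
  | (m+1) =>
    rw [fA_rec (m+1) (by omega)]

lemma hR2 : Pser = X * Eser + Cser * (Fser + Fser + Pser) := by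
  ext n
  rw [map_add, ← pow_one (X : PowerSeries ℤ), coeff_X_pow_mul', coeff_mul,
    Finset.Nat.sum_antidiagonal_eq_sum_range_succ_mk]
  simp only [Pser, Eser, Cser, Fser, coeff_mk, map_add, map_mul, map_ofNat]
  match n with
  | 0 => simp [pA_zero]
  | (m+1) =>
    rw [pA_rec (m+1) (by omega)]
    simp only [show (1:ℕ) ≤ m+1 by omega, if_true]
    congr 1
    apply Finset.sum_congr rfl
    intro k _
    ring

theorem aux_final :
    (1 - PowerSeries.X - PowerSeries.X ^ 2) ^ 2 *
        PowerSeries.mk (fun n => (pA n : ℤ)) =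
      PowerSeries.X * (1 - PowerSeries.X + PowerSeries.X ^ 3 - PowerSeries.X ^ 4) := by
  have h1 : (1 - X - X^2) * Fser = 1 - X^2 := by
    linear_combination (1 - X - X^2 + X^3) * hR1 + Fser * hCser + (1 - X^2) * hEser
  have h2 : (1 - X - X^2) * Pser = X - X^3 + 2*X^3*Fser := by
    linear_combination (1 - X - X^2 + X^3) * hR2 + (2*Fser + Pser) * hCser
      + (X*(1 - X^2)) * hEser
  have : PowerSeries.mk (fun n => (pA n : ℤ)) = Pser := rfl
  rw [this]
  linear_combination (1 - X - X^2) * h2 + 2*X^3 * h1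

lemma totalParts_eq_pA (n : ℕ) : totalParts n = pA n := by
  rw [totalParts, arA_coe, finsum_mem_coe_finset]
  rfl

/-- `(1 - x - x²)² · P(x) = x(1 - x + x³ - x⁴)` where `P(x) = Σ_{n≥0} p(n) xⁿ`. -/
theorem totalParts_gf :
    (1 - PowerSeries.X - PowerSeries.X ^ 2) ^ 2 *
        PowerSeries.mk (fun n => (totalParts n : ℤ)) =
      PowerSeries.X * (1 - PowerSeries.X + PowerSeries.X ^ 3 - PowerSeries.X ^ 4) := by
  simp only [totalParts_eq_pA]
  exact aux_final
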